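/- Davenport–Hasse relation for m=2: let q be an odd prime power, φ the quadratic character on F_q, and A any multiplicative character on F_q. Then g(A)·g(φA) = g(A²)·g(φ)·Ā(4), where g denotes the Gauss sum. -/

import Mathlib

open Finset

variable {F : Type*} [Field F] [Fintype F] [DecidableEq F]

noncomputable instance : Fintype (MulChar F ℂ) := Fintype.ofFinite _

/-- Greene's binomial coefficient `(A choose B) = B(-1)/q * J(A, B⁻¹)`. -/
noncomputable def greeneBinom (A B : MulChar F ℂ) : ℂ :=
  B (-1) / (Fintype.card F : ℂ) * ∑ x : F, A x * B⁻¹ (1 - x)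

/-- Greene's finite field hypergeometric series ₂F₁. -/
noncomputable def greeneF21 (A B C : MulChar F ℂ) (x : F) : ℂ :=
  ((Fintype.card F : ℂ) / ((Fintype.card F : ℂ) - 1)) *
    ∑ χ : MulChar F ℂ, greeneBinom (A * χ) χ * greeneBinom (B * χ) (C * χ) * χ x

/-- Greene's finite field hypergeometric series ₃F₂. -/
noncomputable def greeneF32 (A B C D E : MulChar F ℂ) (x : F) : ℂ :=
  ((Fintype.card F : ℂ) / ((Fintype.card F : ℂ) - 1)) *
    ∑ χ : MulChar F ℂ, greeneBinom (A * χ) χ * greeneBinom (B * χ) (D * χ) *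
      greeneBinom (C * χ) (E * χ) * χ x

/-- Greene's finite field hypergeometric series ₄F₃. -/
noncomputable def greeneF43 (A₀ A₁ A₂ A₃ B₁ B₂ B₃ : MulChar F ℂ) (x : F) : ℂ :=
  ((Fintype.card F : ℂ) / ((Fintype.card F : ℂ) - 1)) *
    ∑ χ : MulChar F ℂ, greeneBinom (A₀ * χ) χ * greeneBinom (A₁ * χ) (B₁ * χ) *
      greeneBinom (A₂ * χ) (B₂ * χ) * greeneBinom (A₃ * χ) (B₃ * χ) * χ x

private lemma sq_char_cases (hq : Odd (Fintype.card F)) {B : MulChar F ℂ} (hB : B ^ 2 = 1) :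
    B = 1 ∨ B = (quadraticChar F).ringHomComp (Int.castRingHom ℂ) := by
  obtain ⟨k, hk⟩ := hq
  have hk1 : 1 ≤ k := by have := Fintype.one_lt_card (α := F); omega
  have h2 : ringChar F ≠ 2 := by
    intro h
    have := FiniteField.even_card_iff_char_two.mp h
    omega
  obtain ⟨g, hg⟩ := IsCyclic.exists_generator (α := Fˣ)
  have hordg : orderOf g = 2 * k := by
    rw [orderOf_eq_card_of_forall_mem_zpowers hg, Nat.card_eq_fintype_card, Fintype.card_units]; omega
  have hpow : ∀ a : Fˣ, ∃ n : ℕ, g ^ n = a := fun a =>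
    (Submonoid.mem_powers_iff _ _).mp
      ((isOfFinOrder_of_finite g).mem_powers_iff_mem_zpowers.mpr (hg a))
  have hBg : B ↑g = 1 ∨ B ↑g = -1 := by
    have h1 : (B ↑g) ^ 2 = 1 := by
      rw [← B.pow_apply' two_ne_zero, hB, MulChar.one_apply_coe]
    have : (B ↑g - 1) * (B ↑g + 1) = 0 := by ring_nf; linear_combination h1
    rcases mul_eq_zero.mp this with h | h
    · exact Or.inl (by linear_combination h)
    · exact Or.inr (by linear_combination h)
  have hqg : quadraticChar F ↑g = -1 := by
    rw [quadraticChar_eq_pow_of_char_ne_two h2 g.ne_zero]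
    have hcard2 : Fintype.card F / 2 = k := by omega
    rw [hcard2, if_neg]
    intro hgk
    have : orderOf (g : F) ∣ k := orderOf_dvd_of_pow_eq_one hgk
    rw [orderOf_units, hordg] at this
    have := Nat.le_of_dvd (by omega) this
    omega
  rcases hBg with hBg | hBg
  · left
    refine MulChar.ext fun a => ?_
    obtain ⟨n, rfl⟩ := hpow a
    rw [MulChar.one_apply_coe, Units.val_pow_eq_pow_val, map_pow, hBg, one_pow]
  · right
    refine MulChar.ext fun a => ?_
    obtain ⟨n, rfl⟩ := hpow a
    rw [MulChar.ringHomComp_apply, Units.val_pow_eq_pow_val, map_pow, map_pow, hBg, hqg]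
    simp

private lemma sum_sq_eq (h2 : ringChar F ≠ 2) (f : F → ℂ) :
    ∑ u : F, f (u ^ 2) =
      ∑ t : F, (1 + ((quadraticChar F t : ℤ) : ℂ)) * f t := by
  rw [← Finset.sum_fiberwise_of_maps_to (g := fun u : F => u ^ 2)
      (fun x _ => Finset.mem_univ (x ^ 2)) (fun u => f (u ^ 2))]
  refine Finset.sum_congr rfl fun t _ => ?_
  have hcard : ((Finset.univ.filter fun u : F => u ^ 2 = t).card : ℤ)
      = quadraticChar F t + 1 := by
    rw [← quadraticChar_card_sqrts h2 t]
    congr 1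
    rw [Set.toFinset_setOf]
  calc ∑ u ∈ Finset.univ.filter fun u : F => u ^ 2 = t, f (u ^ 2)
      = ∑ u ∈ Finset.univ.filter fun u : F => u ^ 2 = t, f t := by
        refine Finset.sum_congr rfl fun u hu => ?_
        rw [(Finset.mem_filter.mp hu).2]
    _ = ((Finset.univ.filter fun u : F => u ^ 2 = t).card : ℂ) * f t := by
        rw [Finset.sum_const, nsmul_eq_mul]
    _ = (1 + ((quadraticChar F t : ℤ) : ℂ)) * f t := by
        congr 1
        have : ((Finset.univ.filter fun u : F => u ^ 2 = t).card : ℂ)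
            = (((Finset.univ.filter fun u : F => u ^ 2 = t).card : ℤ) : ℂ) := by push_cast; ring
        rw [this, hcard]; push_cast; ring


private lemma jacobiSum_self_eq (h2 : ringChar F ≠ 2) {A : MulChar F ℂ} (hA : A ≠ 1) :
    jacobiSum A A
      = A⁻¹ 4 * jacobiSum ((quadraticChar F).ringHomComp (Int.castRingHom ℂ)) A := by
  have h2' : (2 : F) ≠ 0 := Ring.two_ne_zero h2
  have h4 : (4 : F) ≠ 0 := by
    have h : (4 : F) = 2 * 2 := by norm_num
    rw [h]; exact mul_ne_zero h2' h2'
  have step1 : jacobiSum A A = A 4⁻¹ * ∑ x : F, A (1 - (1 - 2 * x) ^ 2) := by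
    rw [jacobiSum, Finset.mul_sum]
    refine Finset.sum_congr rfl fun x _ => ?_
    rw [← map_mul, ← map_mul]
    congr 1
    field_simp
    ring
  let e : F ≃ F :=
    { toFun := fun x => 1 - 2 * x
      invFun := fun y => (1 - y) / 2
      left_inv := fun x => by field_simp; ring
      right_inv := fun y => by field_simp; ring }
  have step2 : ∑ x : F, A (1 - (1 - 2 * x) ^ 2) = ∑ u : F, A (1 - u ^ 2) :=
    Equiv.sum_comp e (fun u => A (1 - u ^ 2))
  have step3 : ∑ u : F, A (1 - u ^ 2)
      = ∑ t : F, (1 + ((quadraticChar F t : ℤ) : ℂ)) * A (1 - t) :=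
    sum_sq_eq h2 (fun t => A (1 - t))
  have step4 : ∑ t : F, A (1 - t) = 0 := by
    have h := Fintype.sum_equiv (Equiv.subLeft (1 : F)) (fun t => A (1 - t)) (fun s => A s)
      (fun t => rfl)
    rw [h]
    exact MulChar.sum_eq_zero_of_ne_one hA
  have step5 : ∑ t : F, (1 + ((quadraticChar F t : ℤ) : ℂ)) * A (1 - t)
      = jacobiSum ((quadraticChar F).ringHomComp (Int.castRingHom ℂ)) A := by
    rw [jacobiSum]
    have hsplit : ∀ t : F, (1 + ((quadraticChar F t : ℤ) : ℂ)) * A (1 - t)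
        = A (1 - t) + ((quadraticChar F t : ℤ) : ℂ) * A (1 - t) := fun t => by ring
    simp_rw [hsplit]
    rw [Finset.sum_add_distrib, step4, zero_add]
    exact Finset.sum_congr rfl fun t _ => by simp [MulChar.ringHomComp_apply]
  rw [step1, step2, step3, step5, MulChar.inv_apply' A 4]

/-- Davenport–Hasse relation for `m = 2`: `g(A)·g(φA) = g(A²)·g(φ)·Ā(4)`. -/
theorem gaussSum_mul_gaussSum_quad (hq : Odd (Fintype.card F)) (ψ : AddChar F ℂ) (hψ : ψ ≠ 1)
    (φ : MulChar F ℂ) (hφ : orderOf φ = 2) (A : MulChar F ℂ) :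
    gaussSum A ψ * gaussSum (φ * A) ψ = gaussSum (A ^ 2) ψ * gaussSum φ ψ * A⁻¹ (4 : F) := by
  have h2 : ringChar F ≠ 2 := by
    intro h
    obtain ⟨k, hk⟩ := hq
    have := FiniteField.even_card_iff_char_two.mp h
    omega
  have h2' : (2 : F) ≠ 0 := Ring.two_ne_zero h2
  have h4 : (4 : F) ≠ 0 := by
    have h : (4 : F) = 2 * 2 := by norm_num
    rw [h]; exact mul_ne_zero h2' h2'
  have hφ2 : φ ^ 2 = 1 := by rw [← hφ]; exact pow_orderOf_eq_one φ
  have hφ1 : φ ≠ 1 := by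
    intro h; rw [h, orderOf_one] at hφ; omega
  have hφinv : φ⁻¹ = φ := inv_eq_of_mul_eq_one_right (by rw [← sq]; exact hφ2)
  have hφ4 : φ (4 : F) = 1 := by
    have h : (4 : F) = 2 ^ 2 := by norm_num
    rw [h, map_pow, ← φ.pow_apply' two_ne_zero, hφ2, MulChar.one_apply h2'.isUnit]
  rcases eq_or_ne A 1 with rfl | hA1
  · rw [mul_one, one_pow, inv_one, MulChar.one_apply h4.isUnit, mul_one, mul_comm]
  rcases eq_or_ne A φ with rfl | hAφ
  · rw [← sq, hφ2, hφinv, hφ4, mul_one, mul_comm]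
  have hφχ : φ = (quadraticChar F).ringHomComp (Int.castRingHom ℂ) :=
    (sq_char_cases hq hφ2).resolve_left hφ1
  subst hφχ
  set χ := (quadraticChar F).ringHomComp (Int.castRingHom ℂ) with hχdef
  have hA2 : A ^ 2 ≠ 1 := fun h => ((sq_char_cases hq h).elim hA1 hAφ)
  have hAA : A * A ≠ 1 := by rwa [← sq]
  have hχA : χ * A ≠ 1 := fun h => hAφ ((eq_inv_of_mul_eq_one_right h).trans hφinv)
  have hprim : ψ.IsPrimitive := AddChar.IsPrimitive.of_ne_one hψ
  have hcard : (Fintype.card F : ℂ) ≠ 0 := Nat.cast_ne_zero.mpr Fintype.card_ne_zero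
  have hgA : gaussSum A ψ ≠ 0 := gaussSum_ne_zero_of_nontrivial hcard hA1 hprim
  have h1 := jacobiSum_mul_nontrivial hAA ψ
  have h2j := jacobiSum_mul_nontrivial hχA ψ
  have hkey := jacobiSum_self_eq h2 hA1
  rw [sq]
  apply mul_left_cancel₀ hgA
  linear_combination (-(gaussSum (χ * A) ψ)) * h1
    + (gaussSum (A * A) ψ * gaussSum (χ * A) ψ) * hkey
    + (gaussSum (A * A) ψ * (A⁻¹ (4 : F))) * h2j
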